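/- With θ_v(t) = A^v θ(A^v t), θ ∈ 𝒮(ℝ), A > 1, r ∈ ℕ, and p_{v,I} the Taylor approximations as above, the following holds: for any interval I with center x₀, any x ∈ I, and any τ ∉ 2I, (Σ_{v ∈ ℤ} |θ_v(x-τ) - p_{v,I}(x,τ)|²)^{1/2} ≤ C_r |I|^r / |τ - x₀|^{r+1}, where C_r depends only on θ and r. -/

import Mathlib

open Real

lemma iDW {f : ℝ → ℂ} (hf : ContDiff ℝ (⊤ : ℕ∞) f) {s : Set ℝ} (hs : UniqueDiffOn ℝ s)
    {x : ℝ} (hx : x ∈ s) (n : ℕ) :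
    iteratedDerivWithin n f s x = iteratedDeriv n f x := by
  have h : HasFTaylorSeriesUpTo (⊤ : ℕ∞) f (ftaylorSeries ℝ f) := contDiff_iff_ftaylorSeries.mp hf
  have e1 : iteratedFDerivWithin ℝ n f s x = iteratedFDeriv ℝ n f x := by
    rw [← (h.hasFTaylorSeriesUpToOn s).eq_iteratedFDerivWithin_of_uniqueDiffOn (mod_cast le_top) hs hx,
      h.eq_iteratedFDeriv (mod_cast le_top)]
  rw [iteratedDerivWithin_eq_iteratedFDerivWithin, e1, iteratedDeriv_eq_iteratedFDeriv]

lemma iterDeriv_reflect (g : ℝ → ℂ) (n : ℕ) (w t : ℝ) :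
    iteratedDeriv n (fun s => g (w - s)) t = (-1 : ℝ) ^ n • iteratedDeriv n g (w - t) := by
  have h : (fun s : ℝ => g (w - s)) = fun s : ℝ => (fun u : ℝ => g (w + u)) (-s) := by
    funext s; simp [sub_eq_add_neg]
  rw [h, iteratedDeriv_comp_neg n (fun u : ℝ => g (w + u)) t,
    iteratedDeriv_comp_const_add n g w]
  simp [sub_eq_add_neg]

lemma iterDeriv_scaled (θ : SchwartzMap ℝ ℂ) (c : ℂ) (a : ℝ) (n : ℕ) (x : ℝ) :
    iteratedDeriv n (fun t : ℝ => c * θ (a * t)) x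
      = c * ((a ^ n : ℝ) • iteratedDeriv n (⇑θ) (a * x)) := by
  have hcd : ContDiffOn ℝ n (fun t : ℝ => θ (a * t)) Set.univ :=
    ((θ.smooth n).comp (contDiff_const.mul contDiff_id)).contDiffOn
  have h1 : iteratedDeriv n (fun t : ℝ => c * θ (a * t)) x
      = c * iteratedDeriv n (fun t : ℝ => θ (a * t)) x := by
    have := iteratedDerivWithin_const_smul (Set.mem_univ x) uniqueDiffOn_univ c (hcd.contDiffWithinAt (Set.mem_univ x))
    simp only [iteratedDerivWithin_univ] at this
    simpa [smul_eq_mul] using this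
  rw [h1, iteratedDeriv_comp_const_smul (θ.smooth n) a]

lemma taylor_two_sided {f : ℝ → ℂ} (hf : ContDiff ℝ (⊤ : ℕ∞) f) {r : ℕ} (hr : 1 ≤ r)
    (c y B : ℝ) (hB : ∀ ξ ∈ Set.uIcc c y, ‖iteratedDeriv r f ξ‖ ≤ B) :
    ‖f y - ∑ k ∈ Finset.range r,
        iteratedDeriv k f c * ((y - c : ℝ) : ℂ) ^ k / (k.factorial : ℂ)‖
      ≤ B * |y - c| ^ r / (r - 1).factorial := by
  obtain ⟨n, rfl⟩ : ∃ n, r = n + 1 := ⟨r - 1, (Nat.succ_pred_eq_of_pos hr).symm⟩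
  simp only [Nat.add_sub_cancel]
  have hcd : ∀ a b : ℝ, ContDiffOn ℝ (n + 1 : ℕ) f (Set.Icc a b) :=
    fun a b => (hf.of_le (mod_cast le_top)).contDiffOn
  rcases lt_trichotomy c y with h | h | h
  · -- c < y
    have hs : UniqueDiffOn ℝ (Set.Icc c y) := uniqueDiffOn_Icc h
    have hC : ∀ ξ ∈ Set.Icc c y, ‖iteratedDerivWithin (n + 1) f (Set.Icc c y) ξ‖ ≤ B := by
      intro ξ hξ
      rw [iDW hf hs hξ]
      exact hB ξ (by rwa [Set.uIcc_of_le h.le])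
    have key := taylor_mean_remainder_bound (f := f) (a := c) (b := y) (x := y) (n := n)
      h.le (hcd c y) (Set.right_mem_Icc.mpr h.le) hC
    rw [taylor_within_apply] at key
    have e : ∀ k ∈ Finset.range (n + 1),
        (((k.factorial : ℝ))⁻¹ * (y - c) ^ k) • iteratedDerivWithin k f (Set.Icc c y) c
          = iteratedDeriv k f c * ((y - c : ℝ) : ℂ) ^ k / (k.factorial : ℂ) := by
      intro k _
      rw [iDW hf hs (Set.left_mem_Icc.mpr h.le), Complex.real_smul]
      push_cast
      ring
    rw [Finset.sum_congr rfl e] at key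
    have : |y - c| = y - c := abs_of_nonneg (by linarith)
    rw [this]
    exact key
  · -- c = y
    subst h
    have hsum : (∑ k ∈ Finset.range (n + 1),
        iteratedDeriv k f c * ((c - c : ℝ) : ℂ) ^ k / (k.factorial : ℂ)) = f c := by
      rw [Finset.sum_eq_single_of_mem 0 (Finset.mem_range.mpr (Nat.succ_pos n))]
      · simp
      · intro k _ hk
        simp [zero_pow hk, sub_self]
    rw [hsum]
    simp
  · -- y < c
    set F : ℝ → ℂ := fun s => f (2 * c - s) with hF
    have hFc : ContDiff ℝ (⊤ : ℕ∞) F := hf.comp (contDiff_const.sub contDiff_id)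
    have hRefl : ∀ (k : ℕ) (t : ℝ),
        iteratedDeriv k F t = (-1 : ℝ) ^ k • iteratedDeriv k f (2 * c - t) :=
      fun k t => iterDeriv_reflect f k (2 * c) t
    have hcy : c < 2 * c - y := by linarith
    have hs : UniqueDiffOn ℝ (Set.Icc c (2 * c - y)) := uniqueDiffOn_Icc hcy
    have hC : ∀ ξ ∈ Set.Icc c (2 * c - y),
        ‖iteratedDerivWithin (n + 1) F (Set.Icc c (2 * c - y)) ξ‖ ≤ B := by
      intro ξ hξ
      rw [iDW hFc hs hξ, hRefl, norm_smul]
      have h2 : 2 * c - ξ ∈ Set.uIcc c y := by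
        rw [Set.uIcc_of_ge h.le]
        obtain ⟨h3, h4⟩ := hξ
        exact ⟨by linarith, by linarith⟩
      have := hB _ h2
      calc ‖(-1 : ℝ) ^ (n + 1)‖ * ‖iteratedDeriv (n + 1) f (2 * c - ξ)‖
          = ‖iteratedDeriv (n + 1) f (2 * c - ξ)‖ := by
            simp
        _ ≤ B := this
    have key := taylor_mean_remainder_bound (f := F) (a := c) (b := 2 * c - y)
      (x := 2 * c - y) (n := n) hcy.le ((hFc.of_le (mod_cast le_top)).contDiffOn)
      (Set.right_mem_Icc.mpr hcy.le) hC
    rw [taylor_within_apply] at key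
    have eF : F (2 * c - y) = f y := by simp [hF]
    have e : ∀ k ∈ Finset.range (n + 1),
        (((k.factorial : ℝ))⁻¹ * ((2 * c - y) - c) ^ k) •
            iteratedDerivWithin k F (Set.Icc c (2 * c - y)) c
          = iteratedDeriv k f c * ((y - c : ℝ) : ℂ) ^ k / (k.factorial : ℂ) := by
      intro k _
      rw [iDW hFc hs (Set.left_mem_Icc.mpr hcy.le), hRefl]
      have e2 : (2 * c - c) = c := by ring
      rw [e2, smul_smul, Complex.real_smul]
      have e3 : ((k.factorial : ℝ))⁻¹ * (2 * c - y - c) ^ k * (-1 : ℝ) ^ k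
          = ((k.factorial : ℝ))⁻¹ * (y - c) ^ k := by
        rw [mul_assoc, ← mul_pow]; ring_nf
      rw [e3]
      push_cast
      ring
    rw [Finset.sum_congr rfl e, eF] at key
    have e4 : (2 * c - y - c) = |y - c| := by
      rw [abs_of_nonpos (by linarith)]; ring
    rw [e4] at key
    exact key

lemma geom_min (A : ℝ) (hA : 1 < A) (p : ℕ) (hp : 1 ≤ p) (a b : ℝ) (ha : 0 ≤ a) (hb : 0 ≤ b)
    (v₀ : ℤ) :
    Summable (fun v : ℤ => min (a * (A ^ v) ^ p) (b / A ^ v)) ∧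
    ∑' v : ℤ, min (a * (A ^ v) ^ p) (b / A ^ v)
      ≤ (a * (A ^ v₀) ^ p + b / A ^ v₀) * (A / (A - 1)) := by
  have hA0 : (0 : ℝ) < A := lt_trans one_pos hA
  have hAne : A ≠ 0 := ne_of_gt hA0
  have hz : ∀ v : ℤ, (0 : ℝ) < A ^ v := fun v => zpow_pos hA0 v
  have hq : A⁻¹ < 1 := inv_lt_one_of_one_lt₀ hA
  have hq0 : (0 : ℝ) ≤ A⁻¹ := inv_nonneg.mpr hA0.le
  have hqp : (A⁻¹) ^ p < 1 := pow_lt_one₀ hq0 hq (by omega)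
  have hqp0 : (0 : ℝ) ≤ (A⁻¹) ^ p := pow_nonneg hq0 p
  have hQ : (1 - A⁻¹)⁻¹ = A / (A - 1) := by
    rw [show (1 - A⁻¹) = (A - 1) / A by field_simp, inv_div]
  have hA1 : (0:ℝ) < A - 1 := by linarith
  have hQ0 : (0:ℝ) < A / (A - 1) := by positivity
  have hmono : (1 - (A⁻¹) ^ p)⁻¹ ≤ A / (A - 1) := by
    rw [← hQ]
    have h1 : (A⁻¹) ^ p ≤ A⁻¹ := pow_le_of_le_one hq0 hq.le (by omega)
    have h2 : (0:ℝ) < 1 - A⁻¹ := by linarith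
    exact inv_anti₀ h2 (by linarith)
  -- the two pieces
  set h₁ : ℤ → ℝ := fun v => if v ≤ v₀ then a * (A ^ v) ^ p else 0 with hh₁
  set h₂ : ℤ → ℝ := fun v => if v₀ < v then b / A ^ v else 0 with hh₂
  have e₁inj : Function.Injective (fun n : ℕ => v₀ - (n : ℤ)) := by
    intro m n h; simpa using h
  have e₂inj : Function.Injective (fun n : ℕ => v₀ + 1 + (n : ℤ)) := by
    intro m n h; simpa using h
  have supp₁ : Function.support h₁ ⊆ Set.range (fun n : ℕ => v₀ - (n : ℤ)) := by
    intro v hv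
    by_cases hvv : v ≤ v₀
    · refine ⟨(v₀ - v).toNat, ?_⟩
      show v₀ - ((v₀ - v).toNat : ℤ) = v
      rw [Int.toNat_of_nonneg (by omega : (0:ℤ) ≤ v₀ - v)]; ring
    · simp [hh₁, hvv] at hv
  have supp₂ : Function.support h₂ ⊆ Set.range (fun n : ℕ => v₀ + 1 + (n : ℤ)) := by
    intro v hv
    by_cases hvv : v₀ < v
    · refine ⟨(v - (v₀ + 1)).toNat, ?_⟩
      show v₀ + 1 + ((v - (v₀ + 1)).toNat : ℤ) = v
      rw [Int.toNat_of_nonneg (by omega : (0:ℤ) ≤ v - (v₀ + 1))]; ring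
    · simp [hh₂, hvv] at hv
  have comp₁ : (fun n : ℕ => h₁ (v₀ - (n : ℤ))) = fun n : ℕ => (a * (A ^ v₀) ^ p) * ((A⁻¹) ^ p) ^ n := by
    funext n
    have hle : v₀ - (n : ℤ) ≤ v₀ := by linarith [Int.ofNat_nonneg n]
    simp only [hh₁, if_pos hle]
    rw [zpow_sub₀ hAne, div_pow, zpow_natCast, ← pow_mul, inv_pow, inv_pow, ← pow_mul,
      mul_comm p n]
    ring
  have comp₂ : (fun n : ℕ => h₂ (v₀ + 1 + (n : ℤ))) = fun n : ℕ => (b / A ^ (v₀ + 1)) * (A⁻¹) ^ n := by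
    funext n
    have hlt : v₀ < v₀ + 1 + (n : ℤ) := by linarith [Int.ofNat_nonneg n]
    simp only [hh₂, if_pos hlt]
    rw [zpow_add₀ hAne, zpow_natCast, div_mul_eq_div_div, div_eq_mul_inv (b / A ^ (v₀+1)), inv_pow]
  have sum₁n : Summable (fun n : ℕ => h₁ (v₀ - (n : ℤ))) := by
    rw [comp₁]; exact (summable_geometric_of_lt_one hqp0 hqp).mul_left _
  have sum₂n : Summable (fun n : ℕ => h₂ (v₀ + 1 + (n : ℤ))) := by
    rw [comp₂]; exact (summable_geometric_of_lt_one hq0 hq).mul_left _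
  have sum₁ : Summable h₁ := (Function.Injective.summable_iff e₁inj (by
    intro v hv; by_contra hne; exact hv (supp₁ hne))).mp sum₁n
  have sum₂ : Summable h₂ := (Function.Injective.summable_iff e₂inj (by
    intro v hv; by_contra hne; exact hv (supp₂ hne))).mp sum₂n
  have ts₁ : ∑' v : ℤ, h₁ v = (a * (A ^ v₀) ^ p) * (1 - (A⁻¹) ^ p)⁻¹ := by
    rw [← e₁inj.tsum_eq supp₁, comp₁, tsum_mul_left, tsum_geometric_of_lt_one hqp0 hqp]
  have ts₂ : ∑' v : ℤ, h₂ v = (b / A ^ (v₀ + 1)) * (1 - A⁻¹)⁻¹ := by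
    rw [← e₂inj.tsum_eq supp₂, comp₂, tsum_mul_left, tsum_geometric_of_lt_one hq0 hq]
  have hmin_le : ∀ v : ℤ, min (a * (A ^ v) ^ p) (b / A ^ v) ≤ h₁ v + h₂ v := by
    intro v
    by_cases hv : v ≤ v₀
    · have : h₂ v = 0 := by simp [hh₂, not_lt.mpr hv]
      rw [this, add_zero]
      simp only [hh₁, if_pos hv]
      exact min_le_left _ _
    · have : h₁ v = 0 := by simp [hh₁, hv]
      rw [this, zero_add]
      simp only [hh₂, if_pos (not_le.mp hv)]
      exact min_le_right _ _
  have hmin0 : ∀ v : ℤ, 0 ≤ min (a * (A ^ v) ^ p) (b / A ^ v) := by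
    intro v
    exact le_min (by positivity) (by positivity)
  have sumh : Summable (fun v : ℤ => h₁ v + h₂ v) := sum₁.add sum₂
  have sumin : Summable (fun v : ℤ => min (a * (A ^ v) ^ p) (b / A ^ v)) :=
    Summable.of_nonneg_of_le hmin0 hmin_le sumh
  refine ⟨sumin, ?_⟩
  calc ∑' v : ℤ, min (a * (A ^ v) ^ p) (b / A ^ v)
      ≤ ∑' v : ℤ, (h₁ v + h₂ v) := sumin.tsum_le_tsum hmin_le sumh
    _ = (∑' v : ℤ, h₁ v) + ∑' v : ℤ, h₂ v := sum₁.tsum_add sum₂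
    _ ≤ (a * (A ^ v₀) ^ p) * (A / (A - 1)) + (b / A ^ v₀) * (A / (A - 1)) := by
        rw [ts₁, ts₂]
        have hle : A ^ v₀ ≤ A ^ (v₀ + 1) := by
          rw [zpow_add_one₀ hAne]; nlinarith [hz v₀]
        have t1 : a * (A ^ v₀) ^ p * (1 - A⁻¹ ^ p)⁻¹ ≤ a * (A ^ v₀) ^ p * (A / (A - 1)) :=
          mul_le_mul_of_nonneg_left hmono (by positivity)
        have hb' : b / A ^ (v₀ + 1) ≤ b / A ^ v₀ :=
          div_le_div_of_nonneg_left hb (hz v₀) hle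
        have t2 : b / A ^ (v₀ + 1) * (1 - A⁻¹)⁻¹ ≤ b / A ^ v₀ * (A / (A - 1)) := by
          rw [hQ]; exact mul_le_mul_of_nonneg_right hb' hQ0.le
        exact add_le_add t1 t2
    _ = (a * (A ^ v₀) ^ p + b / A ^ v₀) * (A / (A - 1)) := by ring

/-- Square-function smoothness estimate for the kernel `{θ_v(x-τ)}`: with
`θ_v(t) = A^v θ(A^v t)` and `p_{v,I}` the Taylor approximations of degree `r-1` at
`x₀ - τ`, for `x ∈ I` (center `x₀`, half-length `ρ`) and `τ ∉ 2I`,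
`(Σ_v |θ_v(x-τ) - p_{v,I}(x,τ)|²)^{1/2} ≤ C_r |I|^r / |τ-x₀|^{r+1}`. -/
theorem stmt12 (θ : SchwartzMap ℝ ℂ) (A : ℝ) (hA : 1 < A) (r : ℕ) (hr : 1 ≤ r) :
    ∃ C : ℝ, ∀ (x₀ ρ : ℝ), 0 < ρ →
      ∀ x ∈ Set.Icc (x₀ - ρ) (x₀ + ρ),
      ∀ τ ∉ Set.Icc (x₀ - 2 * ρ) (x₀ + 2 * ρ),
      Summable (fun v : ℤ =>
        ‖((A : ℂ) ^ v) * θ ((A : ℝ) ^ v * (x - τ)) -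
            ∑ α ∈ Finset.range r,
              iteratedDeriv α (fun t : ℝ => ((A : ℂ) ^ v) * θ ((A : ℝ) ^ v * t)) (x₀ - τ) *
                ((x - x₀ : ℝ) : ℂ) ^ α / (α.factorial : ℂ)‖ ^ 2) ∧
      Real.sqrt (∑' v : ℤ,
        ‖((A : ℂ) ^ v) * θ ((A : ℝ) ^ v * (x - τ)) -
            ∑ α ∈ Finset.range r,
              iteratedDeriv α (fun t : ℝ => ((A : ℂ) ^ v) * θ ((A : ℝ) ^ v * t)) (x₀ - τ) *
                ((x - x₀ : ℝ) : ℂ) ^ α / (α.factorial : ℂ)‖ ^ 2) ≤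
        C * (2 * ρ) ^ r / |τ - x₀| ^ (r + 1) := by
  have hA0 : (0 : ℝ) < A := lt_trans one_pos hA
  have hAne : A ≠ 0 := ne_of_gt hA0
  obtain ⟨M₁, hM₁0, hM₁⟩ := θ.decay 0 r
  obtain ⟨M₂, hM₂0, hM₂⟩ := θ.decay (r + 2) r
  set Q : ℝ := A / (A - 1) with hQdef
  have hQ0 : 0 < Q := by
    apply div_pos hA0; linarith
  refine ⟨(M₁ + M₂ * 2 ^ (r + 2) * A) * Q / (r - 1).factorial, ?_⟩
  intro x₀ ρ hρ x hx τ hτ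
  obtain ⟨hx1, hx2⟩ := hx
  set D : ℝ := |τ - x₀| with hDdef
  have hxx : |x - x₀| ≤ ρ := by rw [abs_le]; constructor <;> linarith
  have hDρ : 2 * ρ < D := by
    have hτ' : ¬(x₀ - 2 * ρ ≤ τ ∧ τ ≤ x₀ + 2 * ρ) := by rwa [Set.mem_Icc] at hτ
    rcases not_and_or.mp hτ' with h | h
    · push_neg at h
      calc 2 * ρ < x₀ - τ := by linarith
        _ ≤ |τ - x₀| := by rw [abs_sub_comm]; exact le_abs_self _
    · push_neg at h
      calc 2 * ρ < τ - x₀ := by linarith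
        _ ≤ |τ - x₀| := le_abs_self _
  have hD0 : 0 < D := lt_trans (by positivity) hDρ
  -- points in the segment are far from 0
  have huIcc : ∀ ξ ∈ Set.uIcc (x₀ - τ) (x - τ), D / 2 ≤ |ξ| := by
    intro ξ hξ
    have h1 : |ξ - (x₀ - τ)| ≤ |(x - τ) - (x₀ - τ)| := by
      rcases le_total (x₀ - τ) (x - τ) with h | h
      · rw [Set.uIcc_of_le h] at hξ
        obtain ⟨h2, h3⟩ := hξ
        rw [abs_of_nonneg (by linarith), abs_of_nonneg (by linarith)]; linarith
      · rw [Set.uIcc_of_ge h] at hξ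
        obtain ⟨h2, h3⟩ := hξ
        rw [abs_of_nonpos (by linarith), abs_of_nonpos (by linarith)]; linarith
    have h2 : |(x - τ) - (x₀ - τ)| ≤ ρ := by
      rw [show (x - τ) - (x₀ - τ) = x - x₀ by ring]; exact hxx
    have h3 : |x₀ - τ| = D := by rw [hDdef, abs_sub_comm]
    have h4 := abs_sub_abs_le_abs_sub (x₀ - τ) ξ
    have h5 : |x₀ - τ - ξ| = |ξ - (x₀ - τ)| := abs_sub_comm _ _
    linarith
  -- the per-v bound on the r-th derivative
  set b₀ : ℝ := M₂ * 2 ^ (r + 2) / D ^ (r + 2) with hb₀def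
  have hb₀0 : 0 ≤ b₀ := by positivity
  set B : ℤ → ℝ := fun v => min (M₁ * (A ^ v) ^ (r + 1)) (b₀ / A ^ v) with hBdef
  have hB0 : ∀ v, 0 ≤ B v := fun v =>
    le_min (by positivity) (by positivity)
  have hz : ∀ v : ℤ, (0 : ℝ) < A ^ v := fun v => zpow_pos hA0 v
  -- derivative bound for each v
  have hderiv : ∀ (v : ℤ) (ξ : ℝ), ξ ∈ Set.uIcc (x₀ - τ) (x - τ) →
      ‖iteratedDeriv r (fun t : ℝ => ((A : ℂ) ^ v) * θ ((A : ℝ) ^ v * t)) ξ‖ ≤ B v := by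
    intro v ξ hξ
    rw [iterDeriv_scaled θ ((A : ℂ) ^ v) ((A : ℝ) ^ v) r ξ]
    have hnorm : ‖((A : ℂ) ^ v) * (((A : ℝ) ^ v) ^ r • iteratedDeriv r (⇑θ) ((A : ℝ) ^ v * ξ))‖
        = (A ^ v) * ((A ^ v) ^ r * ‖iteratedFDeriv ℝ r (⇑θ) ((A : ℝ) ^ v * ξ)‖) := by
      rw [norm_mul, norm_smul, norm_zpow, Complex.norm_real,
        ← norm_iteratedFDeriv_eq_norm_iteratedDeriv]
      rw [Real.norm_eq_abs, Real.norm_eq_abs, abs_of_pos hA0, abs_of_pos (pow_pos (hz v) r)]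
    rw [hnorm]
    set N : ℝ := ‖iteratedFDeriv ℝ r (⇑θ) ((A : ℝ) ^ v * ξ)‖ with hNdef
    have hN0 : 0 ≤ N := norm_nonneg _
    apply le_min
    · -- uniform bound
      have h1 : N ≤ M₁ := by
        have := hM₁ ((A : ℝ) ^ v * ξ)
        simpa using this
      calc A ^ v * ((A ^ v) ^ r * N) ≤ A ^ v * ((A ^ v) ^ r * M₁) := by gcongr
        _ = M₁ * (A ^ v) ^ (r + 1) := by rw [pow_succ]; ring
    · -- decay bound
      have hs : A ^ v * (D / 2) ≤ ‖(A : ℝ) ^ v * ξ‖ := by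
        rw [Real.norm_eq_abs, abs_mul, abs_of_pos (hz v)]
        exact mul_le_mul_of_nonneg_left (huIcc ξ hξ) (hz v).le
      have hs0 : 0 < A ^ v * (D / 2) := by positivity
      have h2 : N ≤ M₂ / (A ^ v * (D / 2)) ^ (r + 2) := by
        rw [le_div_iff₀ (by positivity)]
        calc N * (A ^ v * (D / 2)) ^ (r + 2)
            ≤ N * ‖(A : ℝ) ^ v * ξ‖ ^ (r + 2) := by gcongr
          _ = ‖(A : ℝ) ^ v * ξ‖ ^ (r + 2) * N := by ring
          _ ≤ M₂ := hM₂ _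
      calc A ^ v * ((A ^ v) ^ r * N)
          ≤ A ^ v * ((A ^ v) ^ r * (M₂ / (A ^ v * (D / 2)) ^ (r + 2))) := by gcongr
        _ = b₀ / A ^ v := by
            rw [hb₀def, mul_pow, div_pow]
            field_simp
            ring
  -- Taylor remainder bound for each v
  set t : ℤ → ℝ := fun v =>
    ‖((A : ℂ) ^ v) * θ ((A : ℝ) ^ v * (x - τ)) -
      ∑ α ∈ Finset.range r,
        iteratedDeriv α (fun t : ℝ => ((A : ℂ) ^ v) * θ ((A : ℝ) ^ v * t)) (x₀ - τ) *
          ((x - x₀ : ℝ) : ℂ) ^ α / (α.factorial : ℂ)‖ with htdef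
  have ht0 : ∀ v, 0 ≤ t v := fun v => norm_nonneg _
  set ρr : ℝ := ρ ^ r / (r - 1).factorial with hρrdef
  have hρr0 : 0 < ρr := by positivity
  have hkey : ∀ v : ℤ, t v ≤ B v * ρr := by
    intro v
    have hcont : ContDiff ℝ (⊤ : ℕ∞) (fun t : ℝ => ((A : ℂ) ^ v) * θ ((A : ℝ) ^ v * t)) :=
      contDiff_const.mul ((θ.smooth ⊤).comp (contDiff_const.mul contDiff_id))
    have h2 := taylor_two_sided hcont hr (x₀ - τ) (x - τ) (B v) (hderiv v)
    rw [show (x - τ) - (x₀ - τ) = x - x₀ by ring] at h2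
    have h4 : t v ≤ B v * |x - x₀| ^ r / (r - 1).factorial := h2
    refine h4.trans ?_
    rw [hρrdef, div_eq_mul_inv, div_eq_mul_inv, mul_assoc]
    have h5 : |x - x₀| ^ r ≤ ρ ^ r := pow_le_pow_left₀ (abs_nonneg _) hxx r
    have h6 : (0:ℝ) ≤ ((r - 1).factorial : ℝ)⁻¹ := by positivity
    exact mul_le_mul_of_nonneg_left (mul_le_mul_of_nonneg_right h5 h6) (hB0 v)
  -- sum the geometric bound
  obtain ⟨v₀, hv₀l, hv₀r⟩ := exists_mem_Ico_zpow (x := D⁻¹) (by positivity) hA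
  have hsumB := geom_min A hA (r + 1) (by omega) M₁ b₀ hM₁0.le hb₀0 v₀
  obtain ⟨hBsummable, hBsum⟩ := hsumB
  set S : ℝ := ∑' v : ℤ, B v with hSdef
  have hS0 : 0 ≤ S := tsum_nonneg hB0
  have hBleS : ∀ v, B v ≤ S := fun v => hBsummable.le_tsum v (fun w _ => hB0 w)
  -- bound on S
  have hP0 : (0:ℝ) < A ^ v₀ := hz v₀
  have hSbound : S ≤ (M₁ + M₂ * 2 ^ (r + 2) * A) / D ^ (r + 1) * Q := by
    have h1 : (A ^ v₀ : ℝ) ^ (r + 1) ≤ (D⁻¹) ^ (r + 1) :=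
      pow_le_pow_left₀ hP0.le hv₀l _
    have h2 : (A ^ v₀ : ℝ)⁻¹ ≤ A * D := by
      rw [inv_eq_one_div, div_le_iff₀ hP0]
      have h3 : D * D⁻¹ < D * (A ^ v₀ * A) := by
        apply mul_lt_mul_of_pos_left _ hD0
        rw [← zpow_add_one₀ hAne]
        exact hv₀r
      rw [mul_inv_cancel₀ (ne_of_gt hD0)] at h3
      nlinarith
    calc S ≤ (M₁ * (A ^ v₀) ^ (r + 1) + b₀ / A ^ v₀) * Q := hBsum
      _ ≤ (M₁ * (D⁻¹) ^ (r + 1) + b₀ * (A * D)) * Q := by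
          gcongr
          rw [div_eq_mul_inv]
          exact mul_le_mul_of_nonneg_left h2 hb₀0
      _ = (M₁ + M₂ * 2 ^ (r + 2) * A) / D ^ (r + 1) * Q := by
          rw [hb₀def]
          have hD2 : D ^ (r + 2) = D ^ (r + 1) * D := by rw [pow_succ]
          rw [hD2, inv_pow]
          field_simp
  -- summability of the squares
  have htsq : ∀ v : ℤ, t v ^ 2 ≤ B v * (S * ρr ^ 2) := by
    intro v
    have h1 : t v ^ 2 ≤ (B v * ρr) * (S * ρr) := by
      rw [pow_two]
      apply mul_le_mul (hkey v) _ (ht0 v) (by positivity)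
      exact le_trans (hkey v) (mul_le_mul_of_nonneg_right (hBleS v) hρr0.le)
    calc t v ^ 2 ≤ (B v * ρr) * (S * ρr) := h1
      _ = B v * (S * ρr ^ 2) := by ring
  have hsummable : Summable (fun v : ℤ => t v ^ 2) := by
    apply Summable.of_nonneg_of_le (fun v => sq_nonneg _) htsq
    exact hBsummable.mul_right _
  refine ⟨hsummable, ?_⟩
  -- the final estimate
  have htsum : ∑' v : ℤ, t v ^ 2 ≤ (S * ρr) ^ 2 := by
    calc ∑' v : ℤ, t v ^ 2 ≤ ∑' v : ℤ, B v * (S * ρr ^ 2) :=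
          hsummable.tsum_le_tsum htsq (hBsummable.mul_right _)
      _ = S * (S * ρr ^ 2) := by rw [tsum_mul_right]
      _ = (S * ρr) ^ 2 := by ring
  calc Real.sqrt (∑' v : ℤ, t v ^ 2)
      ≤ Real.sqrt ((S * ρr) ^ 2) := Real.sqrt_le_sqrt htsum
    _ = S * ρr := Real.sqrt_sq (by positivity)
    _ ≤ ((M₁ + M₂ * 2 ^ (r + 2) * A) / D ^ (r + 1) * Q) * ρr :=
        mul_le_mul_of_nonneg_right hSbound hρr0.le
    _ ≤ (M₁ + M₂ * 2 ^ (r + 2) * A) * Q / (r - 1).factorial * (2 * ρ) ^ r / D ^ (r + 1) := by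
        rw [hρrdef]
        have hρ2 : ρ ^ r ≤ (2 * ρ) ^ r := by
          apply pow_le_pow_left₀ hρ.le
          linarith
        have hM0 : (0:ℝ) ≤ M₁ + M₂ * 2 ^ (r + 2) * A := by positivity
        calc (M₁ + M₂ * 2 ^ (r + 2) * A) / D ^ (r + 1) * Q * (ρ ^ r / (r - 1).factorial)
            ≤ (M₁ + M₂ * 2 ^ (r + 2) * A) / D ^ (r + 1) * Q * ((2 * ρ) ^ r / (r - 1).factorial) := by
              gcongr
          _ = (M₁ + M₂ * 2 ^ (r + 2) * A) * Q / (r - 1).factorial * (2 * ρ) ^ r / D ^ (r + 1) := by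
              field_simp
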